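/- Let (β,α) ∈ Δ such that T_{β,α} has matching. If α_l > 0, then the kneading invariant k₋ of (β,α_l) is a periodic sequence; if α_r < 2−β, then the kneading invariant k₊ of (β,α_r) is a periodic sequence. -/

import Mathlib

noncomputable section

/-- The upper intermediate β-transformation `T⁺_{β,α}` on `[0,1]`. -/
def Tpos (β α : ℝ) (x : ℝ) : ℝ :=
  if x = (1 - α) / β then 0 else Int.fract (β * x + α)

/-- The lower intermediate β-transformation `T⁻_{β,α}` on `[0,1]`. -/
def Tneg (β α : ℝ) (x : ℝ) : ℝ :=
  if x = (1 - α) / β then 1 else Int.fract (β * x + α)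

/-- The itinerary `τ⁺_{β,α}(x)`: index `n` (from 0) is the `(n+1)`-st entry;
entry is `false` (i.e. 0) iff the `n`-th iterate is `< c`. -/
def tauPos (β α x : ℝ) : ℕ → Bool :=
  fun n => if (Tpos β α)^[n] x < (1 - α) / β then false else true

/-- The itinerary `τ⁻_{β,α}(x)`: entry is `false` (i.e. 0) iff the iterate is `≤ c`. -/
def tauNeg (β α x : ℝ) : ℕ → Bool :=
  fun n => if (Tneg β α)^[n] x ≤ (1 - α) / β then false else true

/-- The kneading invariant `k₊` of `(β,α)`. -/
def kPlus (β α : ℝ) : ℕ → Bool := tauPos β α ((1 - α) / β)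

/-- The kneading invariant `k₋` of `(β,α)`. -/
def kMinus (β α : ℝ) : ℕ → Bool := tauNeg β α ((1 - α) / β)

/-- The kneading space `Ω_{β,α}`. -/
def OmegaSet (β α : ℝ) : Set (ℕ → Bool) :=
  (tauPos β α '' Set.Icc 0 1) ∪ (tauNeg β α '' Set.Icc 0 1)

/-- `Ω` is a subshift of finite type: there is a finite set of finite forbidden words
such that `Ω` is exactly the set of sequences avoiding them. -/
def IsSFT (Ω : Set (ℕ → Bool)) : Prop :=
  ∃ F : Finset (List Bool),
    Ω = {ω | ∀ m n : ℕ, List.ofFn (fun i : Fin n => ω (m + i)) ∉ F}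

/-- `T_{β,α}` has matching. -/
def HasMatching (β α : ℝ) : Prop :=
  ∃ n : ℕ, (Tpos β α)^[n] 0 = (Tneg β α)^[n] 1

/-- The matching time: the smallest `n` with `(T⁺)ⁿ(0) = (T⁻)ⁿ(1)`. -/
def matchingTime (β α : ℝ) : ℕ :=
  sInf {n : ℕ | (Tpos β α)^[n] 0 = (Tneg β α)^[n] 1}

/-- `T_{β,α}` and `T_{β,α'}` have the same matching: both have matching, with the same
matching time `n`, and their kneading invariants agree in the first `n+1` entries. -/
def SameMatching (β α α' : ℝ) : Prop :=
  HasMatching β α ∧ HasMatching β α' ∧ matchingTime β α = matchingTime β α' ∧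
    ∀ i ≤ matchingTime β α, kPlus β α i = kPlus β α' i ∧ kMinus β α i = kMinus β α' i

/-- The matching set `I(β,α)` (a subset of `(0, 2-β)`). -/
def matchInterval (β α : ℝ) : Set ℝ :=
  {α' | α' ∈ Set.Ioo (0 : ℝ) (2 - β) ∧ SameMatching β α α'}

/-- The parameter region `Δ`. -/
def DeltaSet : Set (ℝ × ℝ) :=
  {p | p.1 ∈ Set.Ioo (1 : ℝ) 2 ∧ p.2 ∈ Set.Ioo (0 : ℝ) (2 - p.1)}

/-- A sequence in `{0,1}^ℕ` is periodic. -/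
def IsPeriodicSeq (ω : ℕ → Bool) : Prop :=
  ∃ p : ℕ, 1 ≤ p ∧ ∀ n, ω (n + p) = ω n

/-- A sequence in `{0,1}^ℕ` is eventually periodic. -/
def IsEvPeriodicSeq (ω : ℕ → Bool) : Prop :=
  ∃ k : ℕ, IsPeriodicSeq (fun n => ω (n + k))

/-- Strict lexicographic order on `{0,1}^ℕ`: at the first index where they differ,
`ω` has entry 0 and `ν` has entry 1. -/
def lexLt (ω ν : ℕ → Bool) : Prop :=
  ∃ n : ℕ, (∀ m < n, ω m = ν m) ∧ ω n = false ∧ ν n = true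


/-! ### Auxiliary lemmas -/

section Aux

variable {β a : ℝ}

lemma cc_pos (hβ : 1 < β) (ha2 : a < 2 - β) (hβ2 : β < 2) : 0 < (1 - a) / β := by
  exact div_pos (by linarith) (by linarith)

lemma cc_lt_one (hβ : 1 < β) (ha : 0 < a) : (1 - a) / β < 1 := by
  rw [div_lt_one (by linarith)]
  linarith

lemma Tneg_cc : Tneg β a ((1 - a) / β) = 1 := if_pos rfl

lemma Tpos_cc : Tpos β a ((1 - a) / β) = 0 := if_pos rfl

lemma Tneg_eq_left (hβ : 1 < β) (ha : 0 < a) (hx0 : 0 ≤ x)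
    (hx : x ≤ (1 - a) / β) : Tneg β a x = β * x + a := by
  have hβ0 : (0:ℝ) < β := by linarith
  rcases eq_or_lt_of_le hx with h | h
  · rw [Tneg, if_pos h, h]
    field_simp
    ring
  · rw [Tneg, if_neg (ne_of_lt h)]
    apply Int.fract_eq_self.mpr
    constructor
    · positivity
    · have : β * x < β * ((1 - a) / β) := by nlinarith
      rw [mul_div_cancel₀ _ (ne_of_gt hβ0)] at this
      linarith

lemma Tneg_eq_right (hβ : 1 < β) (hβ2 : β < 2) (ha2 : a < 2 - β) (hx1 : x ≤ 1)
    (hx : (1 - a) / β < x) : Tneg β a x = β * x + a - 1 := by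
  have hβ0 : (0:ℝ) < β := by linarith
  rw [Tneg, if_neg (ne_of_gt hx)]
  have h1 : 1 < β * x + a := by
    have : β * ((1 - a) / β) < β * x := by nlinarith
    rw [mul_div_cancel₀ _ (ne_of_gt hβ0)] at this
    linarith
  have h2 : β * x + a < 2 := by nlinarith
  have := Int.fract_sub_intCast (β * x + a) 1
  rw [← this]
  push_cast
  apply Int.fract_eq_self.mpr
  constructor <;> [linarith; linarith]

lemma Tpos_eq_left (hβ : 1 < β) (ha : 0 < a) (hx0 : 0 ≤ x)
    (hx : x < (1 - a) / β) : Tpos β a x = β * x + a := by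
  have hβ0 : (0:ℝ) < β := by linarith
  rw [Tpos, if_neg (ne_of_lt hx)]
  apply Int.fract_eq_self.mpr
  constructor
  · positivity
  · have : β * x < β * ((1 - a) / β) := by nlinarith
    rw [mul_div_cancel₀ _ (ne_of_gt hβ0)] at this
    linarith

lemma Tpos_eq_right (hβ : 1 < β) (hβ2 : β < 2) (ha2 : a < 2 - β) (hx1 : x ≤ 1)
    (hx : (1 - a) / β ≤ x) : Tpos β a x = β * x + a - 1 := by
  have hβ0 : (0:ℝ) < β := by linarith
  rcases eq_or_lt_of_le hx with h | h
  · rw [Tpos, if_pos h.symm, ← h]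
    field_simp
    ring
  · rw [Tpos, if_neg (ne_of_gt h)]
    have h1 : 1 < β * x + a := by
      have : β * ((1 - a) / β) < β * x := by nlinarith
      rw [mul_div_cancel₀ _ (ne_of_gt hβ0)] at this
      linarith
    have h2 : β * x + a < 2 := by nlinarith
    have := Int.fract_sub_intCast (β * x + a) 1
    rw [← this]
    push_cast
    apply Int.fract_eq_self.mpr
    constructor <;> [linarith; linarith]

lemma Tneg_mem (hβ : 1 < β) (hβ2 : β < 2) (ha : 0 < a) (ha2 : a < 2 - β)
    (hx : x ∈ Set.Icc (0:ℝ) 1) : Tneg β a x ∈ Set.Icc (0:ℝ) 1 := by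
  obtain ⟨hx0, hx1⟩ := hx
  have hβ0 : (0:ℝ) < β := by linarith
  by_cases h : x ≤ (1 - a) / β
  · rw [Tneg_eq_left hβ ha hx0 h]
    constructor
    · positivity
    · have : β * x ≤ β * ((1 - a) / β) := by nlinarith
      rw [mul_div_cancel₀ _ (ne_of_gt hβ0)] at this
      linarith
  · push_neg at h
    rw [Tneg_eq_right hβ hβ2 ha2 hx1 h]
    constructor
    · have : β * ((1 - a) / β) < β * x := by nlinarith
      rw [mul_div_cancel₀ _ (ne_of_gt hβ0)] at this
      linarith
    · nlinarith

lemma Tpos_mem (hβ : 1 < β) (hβ2 : β < 2) (ha : 0 < a) (ha2 : a < 2 - β)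
    (hx : x ∈ Set.Icc (0:ℝ) 1) : Tpos β a x ∈ Set.Icc (0:ℝ) 1 := by
  obtain ⟨hx0, hx1⟩ := hx
  have hβ0 : (0:ℝ) < β := by linarith
  by_cases h : x < (1 - a) / β
  · rw [Tpos_eq_left hβ ha hx0 h]
    constructor
    · positivity
    · have : β * x ≤ β * ((1 - a) / β) := by nlinarith
      rw [mul_div_cancel₀ _ (ne_of_gt hβ0)] at this
      linarith
  · push_neg at h
    rw [Tpos_eq_right hβ hβ2 ha2 hx1 h]
    constructor
    · have : β * ((1 - a) / β) ≤ β * x := by nlinarith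
      rw [mul_div_cancel₀ _ (ne_of_gt hβ0)] at this
      linarith
    · nlinarith

lemma Tneg_iter_mem (hβ : 1 < β) (hβ2 : β < 2) (ha : 0 < a) (ha2 : a < 2 - β)
    (hx : x ∈ Set.Icc (0:ℝ) 1) : ∀ j, (Tneg β a)^[j] x ∈ Set.Icc (0:ℝ) 1 := by
  intro j
  induction j with
  | zero => exact hx
  | succ j ih => rw [Function.iterate_succ_apply']; exact Tneg_mem hβ hβ2 ha ha2 ih

lemma Tpos_iter_mem (hβ : 1 < β) (hβ2 : β < 2) (ha : 0 < a) (ha2 : a < 2 - β)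
    (hx : x ∈ Set.Icc (0:ℝ) 1) : ∀ j, (Tpos β a)^[j] x ∈ Set.Icc (0:ℝ) 1 := by
  intro j
  induction j with
  | zero => exact hx
  | succ j ih => rw [Function.iterate_succ_apply']; exact Tpos_mem hβ hβ2 ha ha2 ih

lemma Tneg_iter_cc (j : ℕ) : (Tneg β a)^[j + 1] ((1 - a) / β) = (Tneg β a)^[j] 1 := by
  rw [Function.iterate_succ_apply, Tneg_cc]

lemma Tpos_iter_cc (j : ℕ) : (Tpos β a)^[j + 1] ((1 - a) / β) = (Tpos β a)^[j] 0 := by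
  rw [Function.iterate_succ_apply, Tpos_cc]

lemma kMinus_succ (j : ℕ) :
    kMinus β a (j + 1) = if (Tneg β a)^[j] 1 ≤ (1 - a) / β then false else true := by
  rw [kMinus, tauNeg, Tneg_iter_cc]

lemma kPlus_succ (j : ℕ) :
    kPlus β a (j + 1) = if (Tpos β a)^[j] 0 < (1 - a) / β then false else true := by
  rw [kPlus, tauPos, Tpos_iter_cc]

lemma kMinus_zero : kMinus β a 0 = false := by
  rw [kMinus, tauNeg]
  simp

lemma kPlus_zero : kPlus β a 0 = true := by
  rw [kPlus, tauPos]
  simp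

end Aux
section Aux2

variable {β a : ℝ}

lemma kMinus_periodic_of_hit {j : ℕ} (hhit : (Tneg β a)^[j] 1 = (1 - a) / β) :
    IsPeriodicSeq (kMinus β a) := by
  refine ⟨j + 1, Nat.le_add_left 1 j, fun m => ?_⟩
  have hc : (Tneg β a)^[j + 1] ((1 - a) / β) = (1 - a) / β := by
    rw [Tneg_iter_cc, hhit]
  simp only [kMinus, tauNeg]
  simp only [Function.iterate_add_apply, hc]

lemma kPlus_periodic_of_hit {j : ℕ} (hhit : (Tpos β a)^[j] 0 = (1 - a) / β) :
    IsPeriodicSeq (kPlus β a) := by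
  refine ⟨j + 1, Nat.le_add_left 1 j, fun m => ?_⟩
  have hc : (Tpos β a)^[j + 1] ((1 - a) / β) = (1 - a) / β := by
    rw [Tpos_iter_cc, hhit]
  simp only [kPlus, tauPos]
  simp only [Function.iterate_add_apply, hc]

lemma Tneg_eq_Tpos {x : ℝ} (hx : x ≠ (1 - a) / β) : Tneg β a x = Tpos β a x := by
  rw [Tneg, Tpos, if_neg hx, if_neg hx]

/-- If matching holds at time `n` and the `Tpos`-orbit of 0 hits `c`, then
the `Tneg`-orbit of 1 hits `c`. -/
lemma cross_neg {n j : ℕ} (hmatch : (Tpos β a)^[n] 0 = (Tneg β a)^[n] 1)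
    (hhit : (Tpos β a)^[j] 0 = (1 - a) / β) :
    ∃ m, (Tneg β a)^[m] 1 = (1 - a) / β := by
  have hper : (Tpos β a)^[j + 1] 0 = 0 := by
    rw [Function.iterate_succ_apply', hhit, Tpos_cc]
  have hcycle : ∀ k, (Tpos β a)^[k * (j + 1)] 0 = 0 := by
    intro k
    induction k with
    | zero => simp
    | succ k ih =>
      have : (k + 1) * (j + 1) = k * (j + 1) + (j + 1) := by ring
      rw [this, Function.iterate_add_apply, hper, ih]
  have hs : ∃ s, (Tpos β a)^[n + s] 0 = (1 - a) / β := by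
    refine ⟨n * (j + 1) + j - n, ?_⟩
    have hle : n ≤ n * (j + 1) := Nat.le_mul_of_pos_right n (Nat.succ_pos j)
    have : n + (n * (j + 1) + j - n) = j + n * (j + 1) := by omega
    rw [this, Function.iterate_add_apply, hcycle, hhit]
  have key : ∀ s ≤ Nat.find hs, (Tneg β a)^[n + s] 1 = (Tpos β a)^[n + s] 0 := by
    intro s hs'
    induction s with
    | zero => simpa using hmatch.symm
    | succ s ih =>
      have hlt : s < Nat.find hs := lt_of_lt_of_le (Nat.lt_succ_self s) hs'
      have hne : (Tpos β a)^[n + s] 0 ≠ (1 - a) / β := Nat.find_min hs hlt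
      have : n + (s + 1) = (n + s) + 1 := by omega
      rw [this, Function.iterate_succ_apply', Function.iterate_succ_apply',
        ih (le_of_lt hlt), Tneg_eq_Tpos hne]
  exact ⟨n + Nat.find hs, (key _ le_rfl).trans (Nat.find_spec hs)⟩

/-- If matching holds at time `n` and the `Tneg`-orbit of 1 hits `c`, then
the `Tpos`-orbit of 0 hits `c`. -/
lemma cross_pos {n j : ℕ} (hmatch : (Tpos β a)^[n] 0 = (Tneg β a)^[n] 1)
    (hhit : (Tneg β a)^[j] 1 = (1 - a) / β) :
    ∃ m, (Tpos β a)^[m] 0 = (1 - a) / β := by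
  have hper : (Tneg β a)^[j + 1] 1 = 1 := by
    rw [Function.iterate_succ_apply', hhit, Tneg_cc]
  have hcycle : ∀ k, (Tneg β a)^[k * (j + 1)] 1 = 1 := by
    intro k
    induction k with
    | zero => simp
    | succ k ih =>
      have : (k + 1) * (j + 1) = k * (j + 1) + (j + 1) := by ring
      rw [this, Function.iterate_add_apply, hper, ih]
  have hs : ∃ s, (Tneg β a)^[n + s] 1 = (1 - a) / β := by
    refine ⟨n * (j + 1) + j - n, ?_⟩
    have hle : n ≤ n * (j + 1) := Nat.le_mul_of_pos_right n (Nat.succ_pos j)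
    have : n + (n * (j + 1) + j - n) = j + n * (j + 1) := by omega
    rw [this, Function.iterate_add_apply, hcycle, hhit]
  have key : ∀ s ≤ Nat.find hs, (Tpos β a)^[n + s] 0 = (Tneg β a)^[n + s] 1 := by
    intro s hs'
    induction s with
    | zero => simpa using hmatch
    | succ s ih =>
      have hlt : s < Nat.find hs := lt_of_lt_of_le (Nat.lt_succ_self s) hs'
      have hne : (Tneg β a)^[n + s] 1 ≠ (1 - a) / β := Nat.find_min hs hlt
      have : n + (s + 1) = (n + s) + 1 := by omega
      rw [this, Function.iterate_succ_apply', Function.iterate_succ_apply',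
        ih (le_of_lt hlt), Tneg_eq_Tpos hne]
  exact ⟨n + Nat.find hs, (key _ le_rfl).trans (Nat.find_spec hs)⟩

end Aux2
section Aux3

/-- Symbolic affine orbit: `Pseq β w x a j` is the `j`-th iterate of `x`
following the branch pattern `w`. -/
def Pseq (β : ℝ) (w : ℕ → Bool) (x a : ℝ) : ℕ → ℝ
  | 0 => x
  | j + 1 => β * Pseq β w x a j + a - (if w j then 1 else 0)

/-- Slope of `Pseq` in the parameter `a`. -/
def Sl (β : ℝ) : ℕ → ℝ
  | 0 => 0
  | j + 1 => β * Sl β j + 1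

variable {β a b : ℝ}

lemma Sl_nonneg (hβ : 0 < β) : ∀ j, 0 ≤ Sl β j := by
  intro j
  induction j with
  | zero => simp [Sl]
  | succ j ih => rw [Sl]; positivity

lemma Pseq_sub (w : ℕ → Bool) (x : ℝ) :
    ∀ j, Pseq β w x b j - Pseq β w x a j = (b - a) * Sl β j := by
  intro j
  induction j with
  | zero => simp [Pseq, Sl]
  | succ j ih =>
    rw [Pseq, Pseq, Sl]
    linear_combination β * ih

lemma Pseq_congr {w w' : ℕ → Bool} (x : ℝ) (m : ℕ) (h : ∀ j < m, w j = w' j) :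
    Pseq β w x a m = Pseq β w' x a m := by
  induction m with
  | zero => rfl
  | succ m ih =>
    rw [Pseq, Pseq, ih (fun j hj => h j (Nat.lt_succ_of_lt hj)), h m (Nat.lt_succ_self m)]

/-- The word of `α` along the orbit of 1 (entries of `k₋` shifted by one). -/
def wSeq (β a : ℝ) : ℕ → Bool := fun j => kMinus β a (j + 1)

/-- The word of `α` along the orbit of 0 (entries of `k₊` shifted by one). -/
def vSeq (β a : ℝ) : ℕ → Bool := fun j => kPlus β a (j + 1)

/-- The orbit of 1 under `Tneg` follows the affine formula along its own word. -/
lemma K2neg (hβ : 1 < β) (hβ2 : β < 2) (ha : 0 < a) (ha2 : a < 2 - β) :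
    ∀ j, (Tneg β a)^[j] 1 = Pseq β (wSeq β a) 1 a j := by
  intro j
  induction j with
  | zero => rfl
  | succ j ih =>
    have hmem := Tneg_iter_mem hβ hβ2 ha ha2 (Set.mem_Icc.mpr ⟨zero_le_one, le_refl 1⟩) j
    rw [Function.iterate_succ_apply', Pseq, ← ih]
    by_cases h : (Tneg β a)^[j] 1 ≤ (1 - a) / β
    · have hw : wSeq β a j = false := by rw [wSeq, kMinus_succ, if_pos h]
      rw [Tneg_eq_left hβ ha hmem.1 h]
      simp [hw]
    · push_neg at h
      have hw : wSeq β a j = true := by rw [wSeq, kMinus_succ, if_neg (not_le.mpr h)]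
      rw [Tneg_eq_right hβ hβ2 ha2 hmem.2 h]
      simp [hw]

/-- The orbit of 0 under `Tpos` follows the affine formula along its own word. -/
lemma K2pos (hβ : 1 < β) (hβ2 : β < 2) (ha : 0 < a) (ha2 : a < 2 - β) :
    ∀ j, (Tpos β a)^[j] 0 = Pseq β (vSeq β a) 0 a j := by
  intro j
  induction j with
  | zero => rfl
  | succ j ih =>
    have hmem := Tpos_iter_mem hβ hβ2 ha ha2 (Set.mem_Icc.mpr ⟨le_refl 0, zero_le_one⟩) j
    rw [Function.iterate_succ_apply', Pseq, ← ih]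
    by_cases h : (Tpos β a)^[j] 0 < (1 - a) / β
    · have hv : vSeq β a j = false := by rw [vSeq, kPlus_succ, if_pos h]
      rw [Tpos_eq_left hβ ha hmem.1 h]
      simp [hv]
    · push_neg at h
      have hv : vSeq β a j = true := by rw [vSeq, kPlus_succ, if_neg (not_lt.mpr h)]
      rw [Tpos_eq_right hβ hβ2 ha2 hmem.2 h]
      simp [hv]

/-- Under strict side conditions the orbit of 1 follows the affine formula for a
given word `w`. -/
lemma K1neg (hβ : 1 < β) (hβ2 : β < 2) (ha : 0 < a) (ha2 : a < 2 - β)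
    (w : ℕ → Bool) (m : ℕ)
    (hside : ∀ j < m, (w j = true → (1 - a) / β < Pseq β w 1 a j) ∧
      (w j = false → Pseq β w 1 a j ≤ (1 - a) / β)) :
    ∀ j ≤ m, (Tneg β a)^[j] 1 = Pseq β w 1 a j := by
  intro j hj
  induction j with
  | zero => rfl
  | succ j ih =>
    have hjm : j < m := hj
    have ih' := ih (le_of_lt hjm)
    have hmem := Tneg_iter_mem hβ hβ2 ha ha2 (Set.mem_Icc.mpr ⟨zero_le_one, le_refl 1⟩) j
    rw [Function.iterate_succ_apply', Pseq, ← ih']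
    cases hw : w j with
    | false =>
      have hle : (Tneg β a)^[j] 1 ≤ (1 - a) / β := ih' ▸ (hside j hjm).2 hw
      rw [Tneg_eq_left hβ ha hmem.1 hle]
      norm_num
    | true =>
      have hlt : (1 - a) / β < (Tneg β a)^[j] 1 := ih' ▸ (hside j hjm).1 hw
      rw [Tneg_eq_right hβ hβ2 ha2 hmem.2 hlt]
      norm_num

lemma K1neg_kMinus (hβ : 1 < β) (hβ2 : β < 2) (ha : 0 < a) (ha2 : a < 2 - β)
    (w : ℕ → Bool) (m : ℕ)
    (hside : ∀ j < m, (w j = true → (1 - a) / β < Pseq β w 1 a j) ∧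
      (w j = false → Pseq β w 1 a j ≤ (1 - a) / β)) :
    ∀ j < m, kMinus β a (j + 1) = w j := by
  intro j hj
  rw [kMinus_succ, K1neg hβ hβ2 ha ha2 w m hside j (le_of_lt hj)]
  cases hw : w j with
  | false => rw [if_pos ((hside j hj).2 hw)]
  | true => rw [if_neg (not_le.mpr ((hside j hj).1 hw))]

/-- Under side conditions (strict on the `false` branch) the orbit of 0 follows
the affine formula for a given word `v`. -/
lemma K1pos (hβ : 1 < β) (hβ2 : β < 2) (ha : 0 < a) (ha2 : a < 2 - β)
    (v : ℕ → Bool) (m : ℕ)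
    (hside : ∀ j < m, (v j = true → (1 - a) / β ≤ Pseq β v 0 a j) ∧
      (v j = false → Pseq β v 0 a j < (1 - a) / β)) :
    ∀ j ≤ m, (Tpos β a)^[j] 0 = Pseq β v 0 a j := by
  intro j hj
  induction j with
  | zero => rfl
  | succ j ih =>
    have hjm : j < m := hj
    have ih' := ih (le_of_lt hjm)
    have hmem := Tpos_iter_mem hβ hβ2 ha ha2 (Set.mem_Icc.mpr ⟨le_refl 0, zero_le_one⟩) j
    rw [Function.iterate_succ_apply', Pseq, ← ih']
    cases hv : v j with
    | false =>
      have hlt : (Tpos β a)^[j] 0 < (1 - a) / β := ih' ▸ (hside j hjm).2 hv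
      rw [Tpos_eq_left hβ ha hmem.1 hlt]
      norm_num
    | true =>
      have hle : (1 - a) / β ≤ (Tpos β a)^[j] 0 := ih' ▸ (hside j hjm).1 hv
      rw [Tpos_eq_right hβ hβ2 ha2 hmem.2 hle]
      norm_num

lemma K1pos_kPlus (hβ : 1 < β) (hβ2 : β < 2) (ha : 0 < a) (ha2 : a < 2 - β)
    (v : ℕ → Bool) (m : ℕ)
    (hside : ∀ j < m, (v j = true → (1 - a) / β ≤ Pseq β v 0 a j) ∧
      (v j = false → Pseq β v 0 a j < (1 - a) / β)) :
    ∀ j < m, kPlus β a (j + 1) = v j := by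
  intro j hj
  rw [kPlus_succ, K1pos hβ hβ2 ha ha2 v m hside j (le_of_lt hj)]
  cases hv : v j with
  | false => rw [if_pos ((hside j hj).2 hv)]
  | true => rw [if_neg (not_lt.mpr ((hside j hj).1 hv))]

/-- The side conditions automatically satisfied by the own word. -/
lemma K2neg_side (hβ : 1 < β) (hβ2 : β < 2) (ha : 0 < a) (ha2 : a < 2 - β) (j : ℕ) :
    (wSeq β a j = true → (1 - a) / β < Pseq β (wSeq β a) 1 a j) ∧
      (wSeq β a j = false → Pseq β (wSeq β a) 1 a j ≤ (1 - a) / β) := by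
  rw [← K2neg hβ hβ2 ha ha2 j]
  by_cases h : (Tneg β a)^[j] 1 ≤ (1 - a) / β
  · have hw : wSeq β a j = false := by rw [wSeq, kMinus_succ, if_pos h]
    rw [hw]
    exact ⟨by simp, fun _ => h⟩
  · have hw : wSeq β a j = true := by rw [wSeq, kMinus_succ, if_neg h]
    rw [hw]
    exact ⟨fun _ => not_le.mp h, by simp⟩

lemma K2pos_side (hβ : 1 < β) (hβ2 : β < 2) (ha : 0 < a) (ha2 : a < 2 - β) (j : ℕ) :
    (vSeq β a j = true → (1 - a) / β ≤ Pseq β (vSeq β a) 0 a j) ∧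
      (vSeq β a j = false → Pseq β (vSeq β a) 0 a j < (1 - a) / β) := by
  rw [← K2pos hβ hβ2 ha ha2 j]
  by_cases h : (Tpos β a)^[j] 0 < (1 - a) / β
  · have hv : vSeq β a j = false := by rw [vSeq, kPlus_succ, if_pos h]
    rw [hv]
    exact ⟨by simp, fun _ => h⟩
  · have hv : vSeq β a j = true := by rw [vSeq, kPlus_succ, if_neg h]
    rw [hv]
    exact ⟨fun _ => not_lt.mp h, by simp⟩

end Aux3
section Aux4

variable {β α : ℝ}

lemma exists_pos_forall_lt (n : ℕ) (g : ℕ → ℝ) (hg : ∀ j < n, 0 < g j) :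
    ∃ ε, 0 < ε ∧ ∀ j < n, ε < g j := by
  induction n with
  | zero => exact ⟨1, one_pos, fun j hj => absurd hj (Nat.not_lt_zero j)⟩
  | succ n ih =>
    obtain ⟨ε, hε, h⟩ := ih (fun j hj => hg j (Nat.lt_succ_of_lt hj))
    have hgn : 0 < g n := hg n (Nat.lt_succ_self n)
    refine ⟨min ε (g n) / 2, by positivity, fun j hj => ?_⟩
    rcases Nat.lt_succ_iff_lt_or_eq.mp hj with hj' | hj'
    · have h1 : min ε (g n) / 2 ≤ ε / 2 := by
        have := min_le_left ε (g n); linarith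
      have := h j hj'
      linarith
    · subst hj'
      have h1 : min ε (g j) / 2 ≤ g j / 2 := by
        have := min_le_right ε (g j); linarith
      linarith

/-- All the facts we need about a member of the matching interval. -/
lemma mem_matchInterval_facts (hβ1 : 1 < β) (hβ2 : β < 2)
    {a' : ℝ} (ha' : a' ∈ matchInterval β α) :
    0 < a' ∧ a' < 2 - β ∧
    (∀ j ≤ matchingTime β α, (Tneg β a')^[j] 1 = Pseq β (wSeq β α) 1 a' j) ∧
    (∀ j ≤ matchingTime β α, (Tpos β a')^[j] 0 = Pseq β (vSeq β α) 0 a' j) ∧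
    (∀ j < matchingTime β α,
      (wSeq β α j = true → (1 - a') / β < Pseq β (wSeq β α) 1 a' j) ∧
      (wSeq β α j = false → Pseq β (wSeq β α) 1 a' j ≤ (1 - a') / β) ∧
      (vSeq β α j = true → (1 - a') / β ≤ Pseq β (vSeq β α) 0 a' j) ∧
      (vSeq β α j = false → Pseq β (vSeq β α) 0 a' j < (1 - a') / β)) ∧
    Pseq β (vSeq β α) 0 a' (matchingTime β α) =
      Pseq β (wSeq β α) 1 a' (matchingTime β α) := by
  obtain ⟨⟨h1, h2⟩, hSM⟩ := ha'
  have hword : ∀ j < matchingTime β α, wSeq β a' j = wSeq β α j := by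
    intro j hj
    exact ((hSM.2.2.2 (j + 1) hj).2).symm
  have hvord : ∀ j < matchingTime β α, vSeq β a' j = vSeq β α j := by
    intro j hj
    exact ((hSM.2.2.2 (j + 1) hj).1).symm
  have hPc : ∀ j ≤ matchingTime β α,
      Pseq β (wSeq β a') 1 a' j = Pseq β (wSeq β α) 1 a' j := by
    intro j hj
    exact Pseq_congr 1 j (fun i hi => hword i (lt_of_lt_of_le hi hj))
  have hQc : ∀ j ≤ matchingTime β α,
      Pseq β (vSeq β a') 0 a' j = Pseq β (vSeq β α) 0 a' j := by
    intro j hj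
    exact Pseq_congr 0 j (fun i hi => hvord i (lt_of_lt_of_le hi hj))
  have hP : ∀ j ≤ matchingTime β α, (Tneg β a')^[j] 1 = Pseq β (wSeq β α) 1 a' j := by
    intro j hj
    rw [K2neg hβ1 hβ2 h1 h2 j, hPc j hj]
  have hQ : ∀ j ≤ matchingTime β α, (Tpos β a')^[j] 0 = Pseq β (vSeq β α) 0 a' j := by
    intro j hj
    rw [K2pos hβ1 hβ2 h1 h2 j, hQc j hj]
  refine ⟨h1, h2, hP, hQ, ?_, ?_⟩
  · intro j hj
    have hsn := K2neg_side hβ1 hβ2 h1 h2 j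
    have hsp := K2pos_side hβ1 hβ2 h1 h2 j
    rw [hword j hj, hPc j (le_of_lt hj)] at hsn
    rw [hvord j hj, hQc j (le_of_lt hj)] at hsp
    exact ⟨hsn.1, hsn.2, hsp.1, hsp.2⟩
  · have hmt : matchingTime β a' = matchingTime β α := hSM.2.2.1.symm
    have hmem : matchingTime β a' ∈
        {k : ℕ | (Tpos β a')^[k] 0 = (Tneg β a')^[k] 1} := Nat.sInf_mem hSM.2.1
    rw [hmt] at hmem
    have := hmem
    rw [Set.mem_setOf_eq, hP _ le_rfl, hQ _ le_rfl] at this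
    exact this

end Aux4
section Main

variable {β α : ℝ}

lemma left_endpoint (hβ1 : 1 < β) (hβ2 : β < 2) (hα1 : 0 < α) (hα2 : α < 2 - β)
    (hM : HasMatching β α) (hL : 0 < sInf (matchInterval β α)) :
    IsPeriodicSeq (kMinus β (sInf (matchInterval β α))) := by
  set n := matchingTime β α with hn
  set w := wSeq β α with hwdef
  set v := vSeq β α with hvdef
  set I := matchInterval β α with hIdef
  set L := sInf I with hLdef
  have hβ0 : (0:ℝ) < β := by linarith
  have hαI : α ∈ I := ⟨⟨hα1, hα2⟩, hM, hM, rfl, fun i _ => ⟨rfl, rfl⟩⟩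
  have hne : I.Nonempty := ⟨α, hαI⟩
  have hbddB : BddBelow I := ⟨0, fun x hx => le_of_lt hx.1.1⟩
  have hLle : L ≤ α := csInf_le hbddB hαI
  have hL2 : L < 2 - β := lt_of_le_of_lt hLle hα2
  have hslpos : ∀ j : ℕ, 0 < Sl β j + 1/β := fun j =>
    add_pos_of_nonneg_of_pos (Sl_nonneg hβ0 j) (by positivity)
  have hDshift : ∀ (wd : ℕ → Bool) (x aa bb : ℝ) (j : ℕ),
      Pseq β wd x bb j - (1 - bb)/β =
        (Pseq β wd x aa j - (1 - aa)/β) + (bb - aa) * (Sl β j + 1/β) := by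
    intro wd x aa bb j
    have h1 := Pseq_sub (β := β) (a := aa) (b := bb) wd x j
    have h2 : (1 - bb)/β = (1 - aa)/β - (bb - aa) * (1/β) := by
      field_simp
      ring
    rw [h2]
    linear_combination h1
  have hfα := mem_matchInterval_facts (α := α) hβ1 hβ2 hαI
  -- limit estimates at L
  have hwf : ∀ j < n, w j = false → Pseq β w 1 L j - (1 - L)/β ≤ 0 := by
    intro j hj hwj
    have h1 : Pseq β w 1 α j - (1 - α)/β ≤ 0 := by
      have := (hfα.2.2.2.2.1 j hj).2.1 hwj
      linarith
    have h2 := hDshift w 1 α L j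
    nlinarith [hslpos j]
  have hwt : ∀ j < n, w j = true → 0 ≤ Pseq β w 1 L j - (1 - L)/β := by
    intro j hj hwj
    by_contra hcon
    push_neg at hcon
    have hs := hslpos j
    have hpos : 0 < (-(Pseq β w 1 L j - (1 - L)/β)) / (Sl β j + 1/β) :=
      div_pos (by linarith) hs
    obtain ⟨a', ha'I, ha'lt⟩ := exists_lt_of_csInf_lt hne
      (show sInf I < L + (-(Pseq β w 1 L j - (1 - L)/β)) / (Sl β j + 1/β) by
        rw [← hLdef]; linarith)
    have ha'ge : L ≤ a' := csInf_le hbddB ha'I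
    have hfa' := mem_matchInterval_facts (α := α) hβ1 hβ2 ha'I
    have hgt : 0 < Pseq β w 1 a' j - (1 - a')/β := by
      have := (hfa'.2.2.2.2.1 j hj).1 hwj
      linarith
    have h3 : a' - L < (-(Pseq β w 1 L j - (1 - L)/β)) / (Sl β j + 1/β) := by linarith
    have h4 := (lt_div_iff₀ hs).mp h3
    have h2 := hDshift w 1 L a' j
    linarith
  have hvt : ∀ j < n, v j = true → 0 ≤ Pseq β v 0 L j - (1 - L)/β := by
    intro j hj hvj
    by_contra hcon
    push_neg at hcon
    have hs := hslpos j
    have hpos : 0 < (-(Pseq β v 0 L j - (1 - L)/β)) / (Sl β j + 1/β) :=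
      div_pos (by linarith) hs
    obtain ⟨a', ha'I, ha'lt⟩ := exists_lt_of_csInf_lt hne
      (show sInf I < L + (-(Pseq β v 0 L j - (1 - L)/β)) / (Sl β j + 1/β) by
        rw [← hLdef]; linarith)
    have ha'ge : L ≤ a' := csInf_le hbddB ha'I
    have hfa' := mem_matchInterval_facts (α := α) hβ1 hβ2 ha'I
    have hgt : 0 ≤ Pseq β v 0 a' j - (1 - a')/β := by
      have := (hfa'.2.2.2.2.1 j hj).2.2.1 hvj
      linarith
    have h3 : a' - L < (-(Pseq β v 0 L j - (1 - L)/β)) / (Sl β j + 1/β) := by linarith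
    have h4 := (lt_div_iff₀ hs).mp h3
    have h2 := hDshift v 0 L a' j
    linarith
  have hvf : ∀ j < n, v j = false → Pseq β v 0 L j - (1 - L)/β < 0 := by
    intro j hj hvj
    have h1 : Pseq β v 0 α j - (1 - α)/β < 0 := by
      have := (hfα.2.2.2.2.1 j hj).2.2.2 hvj
      linarith
    have h2 := hDshift v 0 α L j
    nlinarith [hslpos j]
  -- Case A: the Tneg-orbit of 1 touches c at parameter L
  by_cases hA : ∃ j, j < n ∧ w j = true ∧ Pseq β w 1 L j = (1 - L)/β
  · set S := {j : ℕ | j < n ∧ w j = true ∧ Pseq β w 1 L j = (1 - L)/β} with hSdef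
    have hSne : S.Nonempty := hA
    have hj₀ := Nat.sInf_mem hSne
    have hside : ∀ i < sInf S, (w i = true → (1 - L)/β < Pseq β w 1 L i) ∧
        (w i = false → Pseq β w 1 L i ≤ (1 - L)/β) := by
      intro i hi
      have hin : i < n := lt_trans hi hj₀.1
      constructor
      · intro hc
        have h0 := hwt i hin hc
        have hne' : Pseq β w 1 L i ≠ (1 - L)/β := fun he =>
          Nat.notMem_of_lt_sInf hi ⟨hin, hc, he⟩
        rcases lt_or_eq_of_le h0 with h | h
        · linarith
        · exact absurd (by linarith) hne'
      · intro hc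
        have := hwf i hin hc
        linarith
    have hform := K1neg hβ1 hβ2 hL hL2 w (sInf S) hside (sInf S) le_rfl
    exact kMinus_periodic_of_hit (hform.trans hj₀.2.2)
  · push_neg at hA
    have hsideW : ∀ j < n, (w j = true → (1 - L)/β < Pseq β w 1 L j) ∧
        (w j = false → Pseq β w 1 L j ≤ (1 - L)/β) := by
      intro j hj
      constructor
      · intro hc
        have h0 := hwt j hj hc
        have hne' := hA j hj hc
        rcases lt_or_eq_of_le h0 with h | h
        · linarith
        · exact absurd (by linarith) hne'
      · intro hc
        have := hwf j hj hc
        linarith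
    have hsideV : ∀ j < n, (v j = true → (1 - L)/β ≤ Pseq β v 0 L j) ∧
        (v j = false → Pseq β v 0 L j < (1 - L)/β) := by
      intro j hj
      exact ⟨fun hc => by have := hvt j hj hc; linarith,
        fun hc => by have := hvf j hj hc; linarith⟩
    have hPL := K1neg hβ1 hβ2 hL hL2 w n hsideW
    have hQL := K1pos hβ1 hβ2 hL hL2 v n hsideV
    have hQP : Pseq β v 0 L n = Pseq β w 1 L n := by
      have a1 := Pseq_sub (β := β) (a := α) (b := L) v 0 n
      have a2 := Pseq_sub (β := β) (a := α) (b := L) w 1 n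
      have a3 := hfα.2.2.2.2.2
      linarith
    have hmatchL : (Tpos β L)^[n] 0 = (Tneg β L)^[n] 1 := by
      rw [hQL n le_rfl, hPL n le_rfl]
      exact hQP
    by_cases hB : ∃ j, j < n ∧ v j = true ∧ Pseq β v 0 L j = (1 - L)/β
    · obtain ⟨j, hj, hvj, hhit⟩ := hB
      have hTj : (Tpos β L)^[j] 0 = (1 - L)/β := by
        rw [hQL j (le_of_lt hj)]
        exact hhit
      obtain ⟨m, hm⟩ := cross_neg hmatchL hTj
      exact kMinus_periodic_of_hit hm
    · push_neg at hB
      have hvtstrict : ∀ j < n, v j = true → 0 < Pseq β v 0 L j - (1 - L)/β := by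
        intro j hj hc
        have h0 := hvt j hj hc
        have hne' := hB j hj hc
        rcases lt_or_eq_of_le h0 with h | h
        · linarith
        · exact absurd (by linarith) hne'
      -- choose a smaller parameter still in I : contradiction
      have hmlt : ∀ m, m < n → Pseq β v 0 α m ≠ Pseq β w 1 α m := by
        intro m hm heq
        have hmem : (Tpos β α)^[m] 0 = (Tneg β α)^[m] 1 := by
          rw [K2pos hβ1 hβ2 hα1 hα2 m, K2neg hβ1 hβ2 hα1 hα2 m, ← hwdef, ← hvdef]
          exact heq
        have hle : n ≤ m := Nat.sInf_le (show m ∈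
          {k : ℕ | (Tpos β α)^[k] 0 = (Tneg β α)^[k] 1} from hmem)
        omega
      set g : ℕ → ℝ := fun j =>
        min (if w j = true then (Pseq β w 1 L j - (1 - L)/β) / (Sl β j + 1/β) else 1)
            (if v j = true then (Pseq β v 0 L j - (1 - L)/β) / (Sl β j + 1/β) else 1)
        with hgdef
      have hg : ∀ j < n, 0 < g j := by
        intro j hj
        apply lt_min
        · by_cases hc : w j = true
          · rw [if_pos hc]
            exact div_pos (by have := (hsideW j hj).1 hc; linarith) (hslpos j)
          · rw [if_neg hc]
            exact one_pos
        · by_cases hc : v j = true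
          · rw [if_pos hc]
            exact div_pos (hvtstrict j hj hc) (hslpos j)
          · rw [if_neg hc]
            exact one_pos
      obtain ⟨ε, hε0, hεlt⟩ := exists_pos_forall_lt n g hg
      set ε' := min ε (L/2) with hε'def
      have hε'0 : 0 < ε' := lt_min hε0 (by linarith)
      have hε'ε : ε' ≤ ε := min_le_left _ _
      have hε'L : ε' ≤ L/2 := min_le_right _ _
      set A := L - ε' with hAdef
      have hA0 : 0 < A := by rw [hAdef]; linarith
      have hAL : A < L := by rw [hAdef]; linarith
      have hA2 : A < 2 - β := by linarith
      have hkeyW : ∀ j < n, w j = true → ε' * (Sl β j + 1/β) < Pseq β w 1 L j - (1 - L)/β := by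
        intro j hj hc
        have h1 : ε' < min
            (if w j = true then (Pseq β w 1 L j - (1 - L)/β) / (Sl β j + 1/β) else 1)
            (if v j = true then (Pseq β v 0 L j - (1 - L)/β) / (Sl β j + 1/β) else 1) :=
          lt_of_le_of_lt hε'ε (hεlt j hj)
        rw [if_pos hc] at h1
        exact (lt_div_iff₀ (hslpos j)).mp (lt_of_lt_of_le h1 (min_le_left _ _))
      have hkeyV : ∀ j < n, v j = true → ε' * (Sl β j + 1/β) < Pseq β v 0 L j - (1 - L)/β := by
        intro j hj hc
        have h1 : ε' < min
            (if w j = true then (Pseq β w 1 L j - (1 - L)/β) / (Sl β j + 1/β) else 1)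
            (if v j = true then (Pseq β v 0 L j - (1 - L)/β) / (Sl β j + 1/β) else 1) :=
          lt_of_le_of_lt hε'ε (hεlt j hj)
        rw [if_pos hc] at h1
        exact (lt_div_iff₀ (hslpos j)).mp (lt_of_lt_of_le h1 (min_le_right _ _))
      have hALs : ∀ j : ℕ, (A - L) * (Sl β j + 1/β) = -(ε' * (Sl β j + 1/β)) := by
        intro j
        rw [hAdef]
        ring
      have hsideWA : ∀ j < n, (w j = true → (1 - A)/β < Pseq β w 1 A j) ∧
          (w j = false → Pseq β w 1 A j ≤ (1 - A)/β) := by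
        intro j hj
        have h4 := hDshift w 1 L A j
        rw [hALs j] at h4
        constructor
        · intro hc
          have h3 := hkeyW j hj hc
          linarith
        · intro hc
          have h1 := hwf j hj hc
          have h5 : 0 ≤ ε' * (Sl β j + 1/β) := le_of_lt (mul_pos hε'0 (hslpos j))
          linarith
      have hsideVA : ∀ j < n, (v j = true → (1 - A)/β ≤ Pseq β v 0 A j) ∧
          (v j = false → Pseq β v 0 A j < (1 - A)/β) := by
        intro j hj
        have h4 := hDshift v 0 L A j
        rw [hALs j] at h4
        constructor
        · intro hc
          have h3 := hkeyV j hj hc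
          linarith
        · intro hc
          have h1 := hvf j hj hc
          have h5 : 0 ≤ ε' * (Sl β j + 1/β) := le_of_lt (mul_pos hε'0 (hslpos j))
          linarith
      have hPA := K1neg hβ1 hβ2 hA0 hA2 w n hsideWA
      have hQA := K1pos hβ1 hβ2 hA0 hA2 v n hsideVA
      have hkMA := K1neg_kMinus hβ1 hβ2 hA0 hA2 w n hsideWA
      have hkPA := K1pos_kPlus hβ1 hβ2 hA0 hA2 v n hsideVA
      have hQPA : Pseq β v 0 A n = Pseq β w 1 A n := by
        have a1 := Pseq_sub (β := β) (a := α) (b := A) v 0 n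
        have a2 := Pseq_sub (β := β) (a := α) (b := A) w 1 n
        have a3 := hfα.2.2.2.2.2
        linarith
      have hmatchA : (Tpos β A)^[n] 0 = (Tneg β A)^[n] 1 := by
        rw [hQA n le_rfl, hPA n le_rfl]
        exact hQPA
      have hmemA : n ∈ {k : ℕ | (Tpos β A)^[k] 0 = (Tneg β A)^[k] 1} := hmatchA
      have hlowA : ∀ m ∈ {k : ℕ | (Tpos β A)^[k] 0 = (Tneg β A)^[k] 1}, n ≤ m := by
        intro m hmem
        by_contra hcon
        push_neg at hcon
        apply hmlt m hcon
        have hm' : (Tpos β A)^[m] 0 = (Tneg β A)^[m] 1 := hmem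
        rw [hQA m (le_of_lt hcon), hPA m (le_of_lt hcon)] at hm'
        have a1 := Pseq_sub (β := β) (a := α) (b := A) v 0 m
        have a2 := Pseq_sub (β := β) (a := α) (b := A) w 1 m
        linarith
      have hmtA : matchingTime β A = n :=
        le_antisymm (Nat.sInf_le hmemA) (hlowA _ (Nat.sInf_mem ⟨n, hmemA⟩))
      have hSMA : SameMatching β α A := by
        refine ⟨hM, ⟨n, hmatchA⟩, ?_, ?_⟩
        · rw [hmtA, ← hn]
        · intro i hi
          rw [← hn] at hi
          match i, hi with
          | 0, _ => exact ⟨kPlus_zero.trans kPlus_zero.symm, kMinus_zero.trans kMinus_zero.symm⟩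
          | (j+1), hi =>
            have hjn : j < n := hi
            constructor
            · have h1 : kPlus β α (j+1) = v j := by rw [hvdef]; rfl
              rw [h1, hkPA j hjn]
            · have h1 : kMinus β α (j+1) = w j := by rw [hwdef]; rfl
              rw [h1, hkMA j hjn]
      have hAI : A ∈ I := ⟨⟨hA0, hA2⟩, hSMA⟩
      have hcontra := csInf_le hbddB hAI
      rw [← hLdef] at hcontra
      exact absurd hcontra (not_le.mpr hAL)

end Main
lemma right_endpoint {β α : ℝ} (hβ1 : 1 < β) (hβ2 : β < 2) (hα1 : 0 < α) (hα2 : α < 2 - β)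
    (hM : HasMatching β α) (hR : sSup (matchInterval β α) < 2 - β) :
    IsPeriodicSeq (kPlus β (sSup (matchInterval β α))) := by
  set n := matchingTime β α with hn
  set w := wSeq β α with hwdef
  set v := vSeq β α with hvdef
  set I := matchInterval β α with hIdef
  set R := sSup I with hRdef
  have hβ0 : (0:ℝ) < β := by linarith
  have hαI : α ∈ I := ⟨⟨hα1, hα2⟩, hM, hM, rfl, fun i _ => ⟨rfl, rfl⟩⟩
  have hne : I.Nonempty := ⟨α, hαI⟩
  have hbddA : BddAbove I := ⟨2 - β, fun x hx => le_of_lt hx.1.2⟩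
  have hRge : α ≤ R := le_csSup hbddA hαI
  have hR0 : 0 < R := lt_of_lt_of_le hα1 hRge
  have hslpos : ∀ j : ℕ, 0 < Sl β j + 1/β := fun j =>
    add_pos_of_nonneg_of_pos (Sl_nonneg hβ0 j) (by positivity)
  have hDshift : ∀ (wd : ℕ → Bool) (x aa bb : ℝ) (j : ℕ),
      Pseq β wd x bb j - (1 - bb)/β =
        (Pseq β wd x aa j - (1 - aa)/β) + (bb - aa) * (Sl β j + 1/β) := by
    intro wd x aa bb j
    have h1 := Pseq_sub (β := β) (a := aa) (b := bb) wd x j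
    have h2 : (1 - bb)/β = (1 - aa)/β - (bb - aa) * (1/β) := by
      field_simp
      ring
    rw [h2]
    linear_combination h1
  have hfα := mem_matchInterval_facts (α := α) hβ1 hβ2 hαI
  -- limit estimates at R
  have hwt : ∀ j < n, w j = true → 0 < Pseq β w 1 R j - (1 - R)/β := by
    intro j hj hwj
    have h1 : 0 < Pseq β w 1 α j - (1 - α)/β := by
      have := (hfα.2.2.2.2.1 j hj).1 hwj
      linarith
    have h2 := hDshift w 1 α R j
    nlinarith [hslpos j]
  have hvt : ∀ j < n, v j = true → 0 ≤ Pseq β v 0 R j - (1 - R)/β := by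
    intro j hj hvj
    have h1 : 0 ≤ Pseq β v 0 α j - (1 - α)/β := by
      have := (hfα.2.2.2.2.1 j hj).2.2.1 hvj
      linarith
    have h2 := hDshift v 0 α R j
    nlinarith [hslpos j]
  have hwf : ∀ j < n, w j = false → Pseq β w 1 R j - (1 - R)/β ≤ 0 := by
    intro j hj hwj
    by_contra hcon
    push_neg at hcon
    have hs := hslpos j
    have hpos : 0 < (Pseq β w 1 R j - (1 - R)/β) / (Sl β j + 1/β) :=
      div_pos (by linarith) hs
    obtain ⟨a', ha'I, ha'lt⟩ := exists_lt_of_lt_csSup hne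
      (show R - (Pseq β w 1 R j - (1 - R)/β) / (Sl β j + 1/β) < sSup I by
        rw [← hRdef]; linarith)
    have ha'le : a' ≤ R := le_csSup hbddA ha'I
    have hfa' := mem_matchInterval_facts (α := α) hβ1 hβ2 ha'I
    have hle' : Pseq β w 1 a' j - (1 - a')/β ≤ 0 := by
      have := (hfa'.2.2.2.2.1 j hj).2.1 hwj
      linarith
    have h3 : R - a' < (Pseq β w 1 R j - (1 - R)/β) / (Sl β j + 1/β) := by linarith
    have h4 := (lt_div_iff₀ hs).mp h3
    have h2 := hDshift w 1 R a' j
    nlinarith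
  have hvf : ∀ j < n, v j = false → Pseq β v 0 R j - (1 - R)/β ≤ 0 := by
    intro j hj hvj
    by_contra hcon
    push_neg at hcon
    have hs := hslpos j
    have hpos : 0 < (Pseq β v 0 R j - (1 - R)/β) / (Sl β j + 1/β) :=
      div_pos (by linarith) hs
    obtain ⟨a', ha'I, ha'lt⟩ := exists_lt_of_lt_csSup hne
      (show R - (Pseq β v 0 R j - (1 - R)/β) / (Sl β j + 1/β) < sSup I by
        rw [← hRdef]; linarith)
    have ha'le : a' ≤ R := le_csSup hbddA ha'I
    have hfa' := mem_matchInterval_facts (α := α) hβ1 hβ2 ha'I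
    have hle' : Pseq β v 0 a' j - (1 - a')/β < 0 := by
      have := (hfa'.2.2.2.2.1 j hj).2.2.2 hvj
      linarith
    have h3 : R - a' < (Pseq β v 0 R j - (1 - R)/β) / (Sl β j + 1/β) := by linarith
    have h4 := (lt_div_iff₀ hs).mp h3
    have h2 := hDshift v 0 R a' j
    nlinarith
  -- Case A: the Tpos-orbit of 0 touches c at parameter R
  by_cases hA : ∃ j, j < n ∧ v j = false ∧ Pseq β v 0 R j = (1 - R)/β
  · set S := {j : ℕ | j < n ∧ v j = false ∧ Pseq β v 0 R j = (1 - R)/β} with hSdef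
    have hSne : S.Nonempty := hA
    have hj₀ := Nat.sInf_mem hSne
    have hside : ∀ i < sInf S, (v i = true → (1 - R)/β ≤ Pseq β v 0 R i) ∧
        (v i = false → Pseq β v 0 R i < (1 - R)/β) := by
      intro i hi
      have hin : i < n := lt_trans hi hj₀.1
      constructor
      · intro hc
        have := hvt i hin hc
        linarith
      · intro hc
        have h0 := hvf i hin hc
        have hne' : Pseq β v 0 R i ≠ (1 - R)/β := fun he =>
          Nat.notMem_of_lt_sInf hi ⟨hin, hc, he⟩
        rcases lt_or_eq_of_le h0 with h | h
        · linarith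
        · exact absurd (by linarith) hne'
    have hform := K1pos hβ1 hβ2 hR0 hR v (sInf S) hside (sInf S) le_rfl
    exact kPlus_periodic_of_hit (hform.trans hj₀.2.2)
  · push_neg at hA
    have hsideV : ∀ j < n, (v j = true → (1 - R)/β ≤ Pseq β v 0 R j) ∧
        (v j = false → Pseq β v 0 R j < (1 - R)/β) := by
      intro j hj
      constructor
      · intro hc
        have := hvt j hj hc
        linarith
      · intro hc
        have h0 := hvf j hj hc
        have hne' := hA j hj hc
        rcases lt_or_eq_of_le h0 with h | h
        · linarith
        · exact absurd (by linarith) hne'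
    have hsideW : ∀ j < n, (w j = true → (1 - R)/β < Pseq β w 1 R j) ∧
        (w j = false → Pseq β w 1 R j ≤ (1 - R)/β) := by
      intro j hj
      exact ⟨fun hc => by have := hwt j hj hc; linarith,
        fun hc => by have := hwf j hj hc; linarith⟩
    have hPR := K1neg hβ1 hβ2 hR0 hR w n hsideW
    have hQR := K1pos hβ1 hβ2 hR0 hR v n hsideV
    have hQP : Pseq β v 0 R n = Pseq β w 1 R n := by
      have a1 := Pseq_sub (β := β) (a := α) (b := R) v 0 n
      have a2 := Pseq_sub (β := β) (a := α) (b := R) w 1 n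
      have a3 := hfα.2.2.2.2.2
      linarith
    have hmatchR : (Tpos β R)^[n] 0 = (Tneg β R)^[n] 1 := by
      rw [hQR n le_rfl, hPR n le_rfl]
      exact hQP
    by_cases hB : ∃ j, j < n ∧ w j = false ∧ Pseq β w 1 R j = (1 - R)/β
    · obtain ⟨j, hj, hwj, hhit⟩ := hB
      have hTj : (Tneg β R)^[j] 1 = (1 - R)/β := by
        rw [hPR j (le_of_lt hj)]
        exact hhit
      obtain ⟨m, hm⟩ := cross_pos hmatchR hTj
      exact kPlus_periodic_of_hit hm
    · push_neg at hB
      have hwfstrict : ∀ j < n, w j = false → Pseq β w 1 R j - (1 - R)/β < 0 := by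
        intro j hj hc
        have h0 := hwf j hj hc
        have hne' := hB j hj hc
        rcases lt_or_eq_of_le h0 with h | h
        · linarith
        · exact absurd (by linarith) hne'
      have hmlt : ∀ m, m < n → Pseq β v 0 α m ≠ Pseq β w 1 α m := by
        intro m hm heq
        have hmem : (Tpos β α)^[m] 0 = (Tneg β α)^[m] 1 := by
          rw [K2pos hβ1 hβ2 hα1 hα2 m, K2neg hβ1 hβ2 hα1 hα2 m, ← hwdef, ← hvdef]
          exact heq
        have hle : n ≤ m := Nat.sInf_le (show m ∈
          {k : ℕ | (Tpos β α)^[k] 0 = (Tneg β α)^[k] 1} from hmem)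
        omega
      set g : ℕ → ℝ := fun j =>
        min (if w j = false then (-(Pseq β w 1 R j - (1 - R)/β)) / (Sl β j + 1/β) else 1)
            (if v j = false then (-(Pseq β v 0 R j - (1 - R)/β)) / (Sl β j + 1/β) else 1)
        with hgdef
      have hg : ∀ j < n, 0 < g j := by
        intro j hj
        apply lt_min
        · by_cases hc : w j = false
          · rw [if_pos hc]
            exact div_pos (by have := hwfstrict j hj hc; linarith) (hslpos j)
          · rw [if_neg hc]
            exact one_pos
        · by_cases hc : v j = false
          · rw [if_pos hc]
            exact div_pos (by have := (hsideV j hj).2 hc; linarith) (hslpos j)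
          · rw [if_neg hc]
            exact one_pos
      obtain ⟨ε, hε0, hεlt⟩ := exists_pos_forall_lt n g hg
      set ε' := min ε ((2 - β - R)/2) with hε'def
      have hε'0 : 0 < ε' := lt_min hε0 (by linarith)
      have hε'ε : ε' ≤ ε := min_le_left _ _
      have hε'R : ε' ≤ (2 - β - R)/2 := min_le_right _ _
      set A := R + ε' with hAdef
      have hA0 : 0 < A := by rw [hAdef]; linarith
      have hAR : R < A := by rw [hAdef]; linarith
      have hA2 : A < 2 - β := by rw [hAdef]; linarith
      have hkeyW : ∀ j < n, w j = false →
          ε' * (Sl β j + 1/β) < -(Pseq β w 1 R j - (1 - R)/β) := by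
        intro j hj hc
        have h1 : ε' < min
            (if w j = false then (-(Pseq β w 1 R j - (1 - R)/β)) / (Sl β j + 1/β) else 1)
            (if v j = false then (-(Pseq β v 0 R j - (1 - R)/β)) / (Sl β j + 1/β) else 1) :=
          lt_of_le_of_lt hε'ε (hεlt j hj)
        rw [if_pos hc] at h1
        exact (lt_div_iff₀ (hslpos j)).mp (lt_of_lt_of_le h1 (min_le_left _ _))
      have hkeyV : ∀ j < n, v j = false →
          ε' * (Sl β j + 1/β) < -(Pseq β v 0 R j - (1 - R)/β) := by
        intro j hj hc
        have h1 : ε' < min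
            (if w j = false then (-(Pseq β w 1 R j - (1 - R)/β)) / (Sl β j + 1/β) else 1)
            (if v j = false then (-(Pseq β v 0 R j - (1 - R)/β)) / (Sl β j + 1/β) else 1) :=
          lt_of_le_of_lt hε'ε (hεlt j hj)
        rw [if_pos hc] at h1
        exact (lt_div_iff₀ (hslpos j)).mp (lt_of_lt_of_le h1 (min_le_right _ _))
      have hARs : ∀ j : ℕ, (A - R) * (Sl β j + 1/β) = ε' * (Sl β j + 1/β) := by
        intro j
        rw [hAdef]
        ring
      have hsideWA : ∀ j < n, (w j = true → (1 - A)/β < Pseq β w 1 A j) ∧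
          (w j = false → Pseq β w 1 A j ≤ (1 - A)/β) := by
        intro j hj
        have h4 := hDshift w 1 R A j
        rw [hARs j] at h4
        constructor
        · intro hc
          have h1 := hwt j hj hc
          have h5 : 0 < ε' * (Sl β j + 1/β) := mul_pos hε'0 (hslpos j)
          linarith
        · intro hc
          have h3 := hkeyW j hj hc
          linarith
      have hsideVA : ∀ j < n, (v j = true → (1 - A)/β ≤ Pseq β v 0 A j) ∧
          (v j = false → Pseq β v 0 A j < (1 - A)/β) := by
        intro j hj
        have h4 := hDshift v 0 R A j
        rw [hARs j] at h4
        constructor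
        · intro hc
          have h1 := hvt j hj hc
          have h5 : 0 < ε' * (Sl β j + 1/β) := mul_pos hε'0 (hslpos j)
          linarith
        · intro hc
          have h3 := hkeyV j hj hc
          linarith
      have hPA := K1neg hβ1 hβ2 hA0 hA2 w n hsideWA
      have hQA := K1pos hβ1 hβ2 hA0 hA2 v n hsideVA
      have hkMA := K1neg_kMinus hβ1 hβ2 hA0 hA2 w n hsideWA
      have hkPA := K1pos_kPlus hβ1 hβ2 hA0 hA2 v n hsideVA
      have hQPA : Pseq β v 0 A n = Pseq β w 1 A n := by
        have a1 := Pseq_sub (β := β) (a := α) (b := A) v 0 n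
        have a2 := Pseq_sub (β := β) (a := α) (b := A) w 1 n
        have a3 := hfα.2.2.2.2.2
        linarith
      have hmatchA : (Tpos β A)^[n] 0 = (Tneg β A)^[n] 1 := by
        rw [hQA n le_rfl, hPA n le_rfl]
        exact hQPA
      have hmemA : n ∈ {k : ℕ | (Tpos β A)^[k] 0 = (Tneg β A)^[k] 1} := hmatchA
      have hlowA : ∀ m ∈ {k : ℕ | (Tpos β A)^[k] 0 = (Tneg β A)^[k] 1}, n ≤ m := by
        intro m hmem
        by_contra hcon
        push_neg at hcon
        apply hmlt m hcon
        have hm' : (Tpos β A)^[m] 0 = (Tneg β A)^[m] 1 := hmem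
        rw [hQA m (le_of_lt hcon), hPA m (le_of_lt hcon)] at hm'
        have a1 := Pseq_sub (β := β) (a := α) (b := A) v 0 m
        have a2 := Pseq_sub (β := β) (a := α) (b := A) w 1 m
        linarith
      have hmtA : matchingTime β A = n :=
        le_antisymm (Nat.sInf_le hmemA) (hlowA _ (Nat.sInf_mem ⟨n, hmemA⟩))
      have hSMA : SameMatching β α A := by
        refine ⟨hM, ⟨n, hmatchA⟩, ?_, ?_⟩
        · rw [hmtA, ← hn]
        · intro i hi
          rw [← hn] at hi
          match i, hi with
          | 0, _ => exact ⟨kPlus_zero.trans kPlus_zero.symm, kMinus_zero.trans kMinus_zero.symm⟩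
          | (j+1), hi =>
            have hjn : j < n := hi
            constructor
            · have h1 : kPlus β α (j+1) = v j := by rw [hvdef]; rfl
              rw [h1, hkPA j hjn]
            · have h1 : kMinus β α (j+1) = w j := by rw [hwdef]; rfl
              rw [h1, hkMA j hjn]
      have hAI : A ∈ I := ⟨⟨hA0, hA2⟩, hSMA⟩
      have hcontra := le_csSup hbddA hAI
      rw [← hRdef] at hcontra
      exact absurd hcontra (not_le.mpr hAR)
theorem endpoint_kneading_periodic (β α : ℝ)
    (hβ : β ∈ Set.Ioo (1 : ℝ) 2) (hα : α ∈ Set.Ioo (0 : ℝ) (2 - β))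
    (hM : HasMatching β α) :
    (0 < sInf (matchInterval β α) → IsPeriodicSeq (kMinus β (sInf (matchInterval β α)))) ∧
    (sSup (matchInterval β α) < 2 - β → IsPeriodicSeq (kPlus β (sSup (matchInterval β α)))) := by
  obtain ⟨hβ1, hβ2⟩ := hβ
  obtain ⟨hα1, hα2⟩ := hα
  exact ⟨fun h => left_endpoint hβ1 hβ2 hα1 hα2 hM h,
    fun h => right_endpoint hβ1 hβ2 hα1 hα2 hM h⟩
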